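/- arXiv:2110.09190 — 7 statements merged into one kernel-verified Lean document; each statement's English description precedes it below -/
import Mathlib

section
/- For the path graph P_n on n vertices (n ≥ 1), the secure domination number of P_n equals ⌈3n/7⌉. -/
open SimpleGraph

/-- `D` is a dominating set of the simple graph `H`. -/
def Dominates {W : Type*} (H : SimpleGraph W) (D : Set W) : Prop :=
  ∀ v ∉ D, ∃ u ∈ D, H.Adj u v

/-- `D` is a secure dominating set of `H`: it is dominating, and every vertex outside `D`
has a neighbour `v ∈ D` whose swap keeps the set dominating. -/
def SecureDominates {W : Type*} (H : SimpleGraph W) (D : Set W) : Prop :=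
  Dominates H D ∧ ∀ u ∉ D, ∃ v ∈ D, H.Adj u v ∧ Dominates H ((D \ {v}) ∪ {u})

/-- The domination number `γ(H)`. -/
noncomputable def domNum {W : Type*} (H : SimpleGraph W) : ℕ :=
  sInf {n | ∃ D : Set W, Dominates H D ∧ D.ncard = n}

/-- The secure domination number `γₛ(H)`. -/
noncomputable def secDomNum {W : Type*} (H : SimpleGraph W) : ℕ :=
  sInf {n | ∃ D : Set W, SecureDominates H D ∧ D.ncard = n}

/-- The edges of `G`, oriented from smaller to larger endpoint. -/
abbrev OEdge {V : Type*} (G : SimpleGraph V) [LinearOrder V] : Type _ :=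
  {p : V × V // G.Adj p.1 p.2 ∧ p.1 < p.2}

/-- The `k`-subdivision `G^{1/k}` (for `k ≥ 2`): each edge `uv` (with `u < v`) is replaced by the
path `u, x₁, …, x_{k-1}, v` of length `k`, the `x_i` being new internal vertices. -/
def Subdiv {V : Type*} (G : SimpleGraph V) [LinearOrder V] (k : ℕ) :
    SimpleGraph (V ⊕ (OEdge G × Fin (k - 1))) :=
  SimpleGraph.fromRel (fun a b =>
    match a, b with
    | Sum.inl u, Sum.inr ⟨e, i⟩ => (i.val = 0 ∧ u = e.val.1) ∨ (i.val = k - 2 ∧ u = e.val.2)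
    | Sum.inr ⟨e, i⟩, Sum.inr ⟨f, j⟩ => e = f ∧ i.val + 1 = j.val
    | _, _ => False)

/-- The star graph `K_{1,n-1}` on `Fin n`, with centre `0`. -/
def starGraph (n : ℕ) : SimpleGraph (Fin n) :=
  SimpleGraph.fromRel (fun a _ => a.val = 0)

/-- `G` is a star graph: some centre is adjacent to exactly the other vertices, and there
are no other edges. -/
def IsStar {V : Type*} (G : SimpleGraph V) : Prop :=
  ∃ c : V, ∀ u v : V, G.Adj u v ↔ (u ≠ v ∧ (u = c ∨ v = c))


/-! ### Auxiliary development for `stmt_1` -/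

/-- Number of `true` values of `f` below `n`. -/
def cnt (f : ℕ → Bool) (n : ℕ) : ℕ := ((Finset.range n).filter (fun i => f i = true)).card

lemma cnt_zero (f : ℕ → Bool) : cnt f 0 = 0 := rfl

lemma cnt_succ (f : ℕ → Bool) (n : ℕ) : cnt f (n + 1) = cnt f n + (f n).toNat := by
  unfold cnt
  rw [Finset.range_add_one, Finset.filter_insert]
  cases h : f n <;> simp [Finset.card_insert_of_notMem, Finset.notMem_range_self, cnt]

/-- Local characterisation of secure dominating sets of the path, on indicator functions. -/
def Valid (n : ℕ) (f : ℕ → Bool) : Prop := ∀ u, u < n → f u = false →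
  (1 ≤ u ∧ f (u-1) = true ∧ (u = 1 ∨ f (u-2) = true ∨ (3 ≤ u ∧ f (u-3) = true)))
  ∨ (u+1 < n ∧ f (u+1) = true ∧ (n ≤ u+2 ∨ f (u+2) = true ∨ (u+3 < n ∧ f (u+3) = true)))

section Equiv

variable {n : ℕ} {D : Set (Fin n)} {f : ℕ → Bool}

lemma ncard_eq_cnt (hf : ∀ v : Fin n, v ∈ D ↔ f v.val = true) : D.ncard = cnt f n := by
  classical
  rw [Set.ncard_eq_toFinset_card' D]
  apply Finset.card_bij (fun (a : Fin n) (_ : a ∈ D.toFinset) => a.val)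
  · intro a ha
    simp only [Finset.mem_filter, Finset.mem_range]
    exact ⟨a.isLt, (hf a).1 (Set.mem_toFinset.mp ha)⟩
  · intro a _ b _ h
    exact Fin.ext h
  · intro b hb
    simp only [Finset.mem_filter, Finset.mem_range] at hb
    exact ⟨⟨b, hb.1⟩, Set.mem_toFinset.mpr ((hf ⟨b, hb.1⟩).2 hb.2), rfl⟩

lemma secure_to_valid (hf : ∀ v : Fin n, v ∈ D ↔ f v.val = true)
    (hsec : SecureDominates (SimpleGraph.pathGraph n) D) : Valid n f := by
  intro u hu hfu
  obtain ⟨hdom, hsw⟩ := hsec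
  set U : Fin n := ⟨u, hu⟩ with hUdef
  have hUD : U ∉ D := by
    intro h; rw [hf U] at h; simp only [hUdef] at h; rw [hfu] at h; exact Bool.false_ne_true h
  obtain ⟨v, hvD, hadj, hdom'⟩ := hsw U hUD
  rw [SimpleGraph.pathGraph_adj] at hadj
  rcases hadj with h | h
  · -- v.val = u + 1 : right defence
    right
    have hv1 : v.val = u + 1 := h.symm
    have hun : u + 1 < n := hv1 ▸ v.isLt
    refine ⟨hun, by rw [← hv1]; exact (hf v).1 hvD, ?_⟩
    by_cases h2 : n ≤ u + 2
    · exact Or.inl h2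
    right
    by_cases hf2 : f (u+2) = true
    · exact Or.inl hf2
    right
    have h2' : u + 2 < n := by omega
    set W : Fin n := ⟨u + 2, h2'⟩ with hWdef
    have hWD : W ∉ D := by
      intro hW; rw [hf W] at hW; simp only [hWdef] at hW; exact hf2 hW
    have hWD' : W ∉ (D \ {v}) ∪ {U} := by
      intro hW
      rcases hW with hW | hW
      · exact hWD hW.1
      · have : W.val = U.val := by rw [Set.mem_singleton_iff] at hW; rw [hW]
        simp only [hWdef, hUdef] at this; omega
    obtain ⟨t, htD', hadjt⟩ := hdom' W hWD'
    rw [SimpleGraph.pathGraph_adj] at hadjt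
    have hWval : W.val = u + 2 := rfl
    rcases htD' with ⟨htD, htv⟩ | htU
    · rcases hadjt with ha | ha
      · exfalso
        apply htv
        rw [Set.mem_singleton_iff]
        apply Fin.ext
        rw [hWval] at ha; omega
      · have ht3 : t.val = u + 3 := by rw [hWval] at ha; omega
        have : f (u+3) = true := by rw [← ht3]; exact (hf t).1 htD
        exact ⟨ht3 ▸ t.isLt, this⟩
    · exfalso
      have : t.val = u := by rw [Set.mem_singleton_iff] at htU; rw [htU]
      rw [hWval] at hadjt; omega
  · -- v.val + 1 = u : left defence
    left
    have hv1 : v.val + 1 = u := h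
    refine ⟨by omega, by rw [show u - 1 = v.val by omega]; exact (hf v).1 hvD, ?_⟩
    by_cases h1 : u = 1
    · exact Or.inl h1
    right
    by_cases hf2 : f (u-2) = true
    · exact Or.inl hf2
    right
    have h2' : u - 2 < n := by omega
    have hu2 : 2 ≤ u := by omega
    set W : Fin n := ⟨u - 2, h2'⟩ with hWdef
    have hWD : W ∉ D := by
      intro hW; rw [hf W] at hW; simp only [hWdef] at hW; exact hf2 hW
    have hWD' : W ∉ (D \ {v}) ∪ {U} := by
      intro hW
      rcases hW with hW | hW
      · exact hWD hW.1
      · have : W.val = U.val := by rw [Set.mem_singleton_iff] at hW; rw [hW]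
        simp only [hWdef, hUdef] at this; omega
    obtain ⟨t, htD', hadjt⟩ := hdom' W hWD'
    rw [SimpleGraph.pathGraph_adj] at hadjt
    have hWval : W.val = u - 2 := rfl
    rcases htD' with ⟨htD, htv⟩ | htU
    · rcases hadjt with ha | ha
      · have ht3 : 3 ≤ u ∧ t.val = u - 3 := by rw [hWval] at ha; omega
        have : f (u-3) = true := by rw [← ht3.2]; exact (hf t).1 htD
        exact ⟨ht3.1, this⟩
      · exfalso
        apply htv
        rw [Set.mem_singleton_iff]
        apply Fin.ext
        rw [hWval] at ha; omega
    · exfalso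
      have : t.val = u := by rw [Set.mem_singleton_iff] at htU; rw [htU]
      rw [hWval] at hadjt; omega

lemma fin_mem_of (hf : ∀ v : Fin n, v ∈ D ↔ f v.val = true) {k : ℕ} (hk : k < n)
    (h : f k = true) : (⟨k, hk⟩ : Fin n) ∈ D := (hf ⟨k, hk⟩).2 h

lemma valid_to_secure (hf : ∀ v : Fin n, v ∈ D ↔ f v.val = true)
    (hv : Valid n f) : SecureDominates (SimpleGraph.pathGraph n) D := by
  have hfval : ∀ w : Fin n, w ∉ D → f w.val = false := by
    intro w hw
    cases h : f w.val
    · rfl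
    · exact absurd ((hf w).2 h) hw
  have hdomD : Dominates (SimpleGraph.pathGraph n) D := by
    intro w hw
    rcases hv w.val w.isLt (hfval w hw) with ⟨h1, hl, _⟩ | ⟨hlt, hr, _⟩
    · refine ⟨⟨w.val - 1, by omega⟩, fin_mem_of hf _ hl, ?_⟩
      rw [SimpleGraph.pathGraph_adj]; left; simp; omega
    · refine ⟨⟨w.val + 1, hlt⟩, fin_mem_of hf _ hr, ?_⟩
      rw [SimpleGraph.pathGraph_adj]; right; simp
  refine ⟨hdomD, ?_⟩
  intro U hU
  have hfu : f U.val = false := hfval U hU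
  rcases hv U.val U.isLt hfu with ⟨h1, hl, htail⟩ | ⟨hlt, hr, htail⟩
  · -- left defence : v = U - 1
    set u := U.val with hudef
    set v : Fin n := ⟨u - 1, by omega⟩ with hvdef
    have hvD : v ∈ D := fin_mem_of hf _ hl
    have hUadj : (SimpleGraph.pathGraph n).Adj U v := by
      rw [SimpleGraph.pathGraph_adj]; right; simp only [hvdef]; omega
    refine ⟨v, hvD, hUadj, ?_⟩
    intro w hw'
    have hUD' : U ∈ (D \ {v}) ∪ {U} := Or.inr rfl
    have hwU : w ≠ U := fun hh => hw' (hh ▸ hUD')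
    by_cases hwv : w = v
    · refine ⟨U, hUD', ?_⟩
      rw [SimpleGraph.pathGraph_adj]; subst hwv; right; simp only [hvdef]; omega
    · have hwD : w ∉ D := by
        intro hD; exact hw' (Or.inl ⟨hD, hwv⟩)
      have hfw : f w.val = false := hfval w hwD
      have hwvval : w.val ≠ u - 1 := fun hh => hwv (Fin.ext hh)
      have hwuval : w.val ≠ u := fun hh => hwU (Fin.ext hh)
      by_cases hw2 : w.val + 2 = u
      · rcases htail with h' | h' | ⟨h3, h'⟩
        · omega
        · exfalso; rw [show u - 2 = w.val by omega] at h'; rw [hfw] at h'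
          exact Bool.false_ne_true h'
        · refine ⟨⟨u - 3, by omega⟩, Or.inl ⟨fin_mem_of hf _ h', ?_⟩, ?_⟩
          · intro hh; rw [Set.mem_singleton_iff] at hh
            have : u - 3 = u - 1 := congrArg Fin.val hh
            omega
          · rw [SimpleGraph.pathGraph_adj]; left; simp; omega
      · rcases hv w.val w.isLt hfw with ⟨hw1, hwl, _⟩ | ⟨hwlt, hwr, _⟩
        · refine ⟨⟨w.val - 1, by omega⟩, Or.inl ⟨fin_mem_of hf _ hwl, ?_⟩, ?_⟩
          · intro hh; rw [Set.mem_singleton_iff] at hh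
            have : w.val - 1 = u - 1 := congrArg Fin.val hh
            omega
          · rw [SimpleGraph.pathGraph_adj]; left; simp; omega
        · refine ⟨⟨w.val + 1, hwlt⟩, Or.inl ⟨fin_mem_of hf _ hwr, ?_⟩, ?_⟩
          · intro hh; rw [Set.mem_singleton_iff] at hh
            have : w.val + 1 = u - 1 := congrArg Fin.val hh
            omega
          · rw [SimpleGraph.pathGraph_adj]; right; simp
  · -- right defence : v = U + 1
    set u := U.val with hudef
    set v : Fin n := ⟨u + 1, hlt⟩ with hvdef
    have hvD : v ∈ D := fin_mem_of hf _ hr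
    have hUadj : (SimpleGraph.pathGraph n).Adj U v := by
      rw [SimpleGraph.pathGraph_adj]; left; simp only [hvdef]; rfl
    refine ⟨v, hvD, hUadj, ?_⟩
    intro w hw'
    have hUD' : U ∈ (D \ {v}) ∪ {U} := Or.inr rfl
    have hwU : w ≠ U := fun hh => hw' (hh ▸ hUD')
    by_cases hwv : w = v
    · refine ⟨U, hUD', ?_⟩
      rw [SimpleGraph.pathGraph_adj]; subst hwv; left; simp only [hvdef]; rfl
    · have hwD : w ∉ D := by
        intro hD; exact hw' (Or.inl ⟨hD, hwv⟩)
      have hfw : f w.val = false := hfval w hwD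
      have hwvval : w.val ≠ u + 1 := fun hh => hwv (Fin.ext hh)
      have hwuval : w.val ≠ u := fun hh => hwU (Fin.ext hh)
      by_cases hw2 : w.val = u + 2
      · rcases htail with h' | h' | ⟨h3, h'⟩
        · omega
        · exfalso; rw [show u + 2 = w.val by omega] at h'; rw [hfw] at h'
          exact Bool.false_ne_true h'
        · refine ⟨⟨u + 3, h3⟩, Or.inl ⟨fin_mem_of hf _ h', ?_⟩, ?_⟩
          · intro hh; rw [Set.mem_singleton_iff] at hh
            have : u + 3 = u + 1 := congrArg Fin.val hh
            omega
          · rw [SimpleGraph.pathGraph_adj]; right; simp; omega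
      · rcases hv w.val w.isLt hfw with ⟨hw1, hwl, _⟩ | ⟨hwlt, hwr, _⟩
        · refine ⟨⟨w.val - 1, by omega⟩, Or.inl ⟨fin_mem_of hf _ hwl, ?_⟩, ?_⟩
          · intro hh; rw [Set.mem_singleton_iff] at hh
            have : w.val - 1 = u + 1 := congrArg Fin.val hh
            omega
          · rw [SimpleGraph.pathGraph_adj]; left; simp; omega
        · refine ⟨⟨w.val + 1, hwlt⟩, Or.inl ⟨fin_mem_of hf _ hwr, ?_⟩, ?_⟩
          · intro hh; rw [Set.mem_singleton_iff] at hh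
            have : w.val + 1 = u + 1 := congrArg Fin.val hh
            omega
          · rw [SimpleGraph.pathGraph_adj]; right; simp

end Equiv

/-! ### The potential function for the lower bound -/

def phiTab : List ℤ := [-100, -100, -100, -100, -100, -97, -97, -97, -97, -97, -3, -3, -3, -3,
  -3, -3, -2, -2, -2, -2, -1, 0, 0, 0, 0, 0, 0, 0, 0, 0, 0, 0, -100, -100, -100, -100, -100,
  1, 1, 1, 2, 2, 3, 3, 3, 3, 3, 3, 3, 3, 3, 3, 3, 3, 3, 3, 3, 3, 3, 3, 3, 3, 3, 3]

def phi (a b c d e f : Bool) : ℤ :=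
  phiTab.getD (a.toNat + 2*b.toNat + 4*c.toNat + 8*d.toNat + 16*e.toNat + 32*f.toNat) 0

theorem step_lemma : ∀ a b c d e f g : Bool,
    (d = false → (c = true ∧ (b = true ∨ a = true)) ∨ (e = true ∧ (f = true ∨ g = true))) →
    phi b c d e f g + 3 ≤ phi a b c d e f + 7 * g.toNat := by decide

set_option maxHeartbeats 1000000 in
set_option synthInstance.maxSize 1024 in
theorem init_lemma : ∀ b0 b1 b2 b3 b4 b5 : Bool,
    (b0 = false → b1 = true ∧ (b2 = true ∨ b3 = true)) →
    (b1 = false → b0 = true ∨ (b2 = true ∧ (b3 = true ∨ b4 = true))) →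
    (b2 = false → (b1 = true ∧ b0 = true) ∨ (b3 = true ∧ (b4 = true ∨ b5 = true))) →
    phi b0 b1 b2 b3 b4 b5 + 18 ≤
      7 * ((b0.toNat + b1.toNat + b2.toNat + b3.toNat + b4.toNat + b5.toNat : ℕ) : ℤ) := by
  decide

set_option maxHeartbeats 1000000 in
set_option synthInstance.maxSize 1024 in
theorem acc_lemma : ∀ b0 b1 b2 b3 b4 b5 : Bool,
    (b3 = false → (b2 = true ∧ (b1 = true ∨ b0 = true)) ∨ (b4 = true ∧ b5 = true)) →
    (b4 = false → (b3 = true ∧ (b2 = true ∨ b1 = true)) ∨ b5 = true) →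
    (b5 = false → b4 = true ∧ (b3 = true ∨ b2 = true)) →
    0 ≤ phi b0 b1 b2 b3 b4 b5 := by decide

lemma invariant {n : ℕ} {f : ℕ → Bool} (hv : Valid n f) (hn : 6 ≤ n) :
    ∀ a, a + 6 ≤ n →
      3 * ((a : ℤ) + 6) + phi (f a) (f (a+1)) (f (a+2)) (f (a+3)) (f (a+4)) (f (a+5))
        ≤ 7 * (cnt f (a + 6) : ℤ) := by
  intro a
  induction a with
  | zero =>
    intro _
    have h0 : f 0 = false → f 1 = true ∧ (f 2 = true ∨ f 3 = true) := by
      intro h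
      rcases hv 0 (by omega) h with ⟨h1, _⟩ | ⟨_, h1, ht⟩
      · omega
      · refine ⟨h1, ?_⟩
        rcases ht with h' | h' | ⟨_, h'⟩
        · omega
        · exact Or.inl h'
        · exact Or.inr h'
    have h1 : f 1 = false → f 0 = true ∨ (f 2 = true ∧ (f 3 = true ∨ f 4 = true)) := by
      intro h
      rcases hv 1 (by omega) h with ⟨_, h1, _⟩ | ⟨_, h1, ht⟩
      · exact Or.inl h1
      · refine Or.inr ⟨h1, ?_⟩
        rcases ht with h' | h' | ⟨_, h'⟩
        · omega
        · exact Or.inl h'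
        · exact Or.inr h'
    have h2 : f 2 = false →
        (f 1 = true ∧ f 0 = true) ∨ (f 3 = true ∧ (f 4 = true ∨ f 5 = true)) := by
      intro h
      rcases hv 2 (by omega) h with ⟨_, h1, ht⟩ | ⟨_, h1, ht⟩
      · refine Or.inl ⟨h1, ?_⟩
        rcases ht with h' | h' | ⟨h3, _⟩
        · omega
        · exact h'
        · omega
      · refine Or.inr ⟨h1, ?_⟩
        rcases ht with h' | h' | ⟨_, h'⟩
        · omega
        · exact Or.inl h'
        · exact Or.inr h'
    have hcnt : cnt f 6 = (f 0).toNat + (f 1).toNat + (f 2).toNat + (f 3).toNat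
        + (f 4).toNat + (f 5).toNat := by
      rw [show (6:ℕ) = 5 + 1 from rfl, cnt_succ, show (5:ℕ) = 4 + 1 from rfl, cnt_succ,
        show (4:ℕ) = 3 + 1 from rfl, cnt_succ, show (3:ℕ) = 2 + 1 from rfl, cnt_succ,
        show (2:ℕ) = 1 + 1 from rfl, cnt_succ, show (1:ℕ) = 0 + 1 from rfl, cnt_succ, cnt_zero]
      ring
    have := init_lemma (f 0) (f 1) (f 2) (f 3) (f 4) (f 5) h0 h1 h2
    rw [hcnt]
    push_cast at this ⊢
    simp only [Nat.zero_add, Nat.cast_zero] at *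
    norm_num
    linarith
  | succ a ih =>
    intro han
    have ih' := ih (by omega)
    have hC : f (a+3) = false →
        (f (a+2) = true ∧ (f (a+1) = true ∨ f a = true)) ∨
        (f (a+4) = true ∧ (f (a+5) = true ∨ f (a+6) = true)) := by
      intro h
      rcases hv (a+3) (by omega) h with ⟨_, h1, ht⟩ | ⟨_, h1, ht⟩
      · refine Or.inl ⟨h1, ?_⟩
        rcases ht with h' | h' | ⟨_, h'⟩
        · omega
        · exact Or.inl h'
        · exact Or.inr h'
      · refine Or.inr ⟨h1, ?_⟩
        rcases ht with h' | h' | ⟨_, h'⟩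
        · omega
        · exact Or.inl h'
        · exact Or.inr h'
    have hstep := step_lemma (f a) (f (a+1)) (f (a+2)) (f (a+3)) (f (a+4)) (f (a+5)) (f (a+6)) hC
    have hcnt : cnt f (a + 1 + 6) = cnt f (a + 6) + (f (a+6)).toNat := by
      rw [show a + 1 + 6 = (a + 6) + 1 by ring, cnt_succ]
    rw [hcnt]
    have e1 : a + 1 + 1 = a + 2 := by ring
    have e2 : a + 1 + 2 = a + 3 := by ring
    have e3 : a + 1 + 3 = a + 4 := by ring
    have e4 : a + 1 + 4 = a + 5 := by ring
    have e5 : a + 1 + 5 = a + 6 := by ring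
    rw [e1, e2, e3, e4, e5]
    push_cast
    push_cast at ih' hstep
    linarith

lemma lower_ge_six {n : ℕ} {f : ℕ → Bool} (hv : Valid n f) (hn : 6 ≤ n) :
    3 * n ≤ 7 * cnt f n := by
  obtain ⟨a, rfl⟩ : ∃ a, n = a + 6 := ⟨n - 6, by omega⟩
  have hinv := invariant hv hn a (le_refl _)
  have hE : 0 ≤ phi (f a) (f (a+1)) (f (a+2)) (f (a+3)) (f (a+4)) (f (a+5)) := by
    apply acc_lemma
    · intro h
      rcases hv (a+3) (by omega) h with ⟨_, h1, ht⟩ | ⟨_, h1, ht⟩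
      · refine Or.inl ⟨h1, ?_⟩
        rcases ht with h' | h' | ⟨_, h'⟩
        · omega
        · exact Or.inl h'
        · exact Or.inr h'
      · refine Or.inr ⟨h1, ?_⟩
        rcases ht with h' | h' | ⟨hlt, h'⟩
        · exact absurd h' (by omega)
        · exact h'
        · omega
    · intro h
      rcases hv (a+4) (by omega) h with ⟨_, h1, ht⟩ | ⟨_, h1, ht⟩
      · refine Or.inl ⟨h1, ?_⟩
        rcases ht with h' | h' | ⟨_, h'⟩
        · omega
        · exact Or.inl h'
        · exact Or.inr h'
      · exact Or.inr h1
    · intro h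
      rcases hv (a+5) (by omega) h with ⟨_, h1, ht⟩ | ⟨h1, _, _⟩
      · refine ⟨h1, ?_⟩
        rcases ht with h' | h' | ⟨_, h'⟩
        · omega
        · exact Or.inl h'
        · exact Or.inr h'
      · omega
  have h1 : (3:ℤ) * ((a:ℤ) + 6) ≤ 7 * (cnt f (a+6) : ℤ) := by linarith
  have h2 : ((3 * (a + 6) : ℕ) : ℤ) ≤ ((7 * cnt f (a + 6) : ℕ) : ℤ) := by push_cast; linarith
  exact_mod_cast h2

lemma lower_small {n : ℕ} {f : ℕ → Bool} (hv : Valid n f) (h1 : 1 ≤ n) (h5 : n ≤ 5) :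
    3 * n ≤ 7 * cnt f n := by
  have hc1 : cnt f 1 = (f 0).toNat := by
    rw [show (1:ℕ) = 0 + 1 from rfl, cnt_succ, cnt_zero]; ring
  have hc2 : cnt f 2 = (f 0).toNat + (f 1).toNat := by
    rw [show (2:ℕ) = 1 + 1 from rfl, cnt_succ, hc1]
  have hc3 : cnt f 3 = (f 0).toNat + (f 1).toNat + (f 2).toNat := by
    rw [show (3:ℕ) = 2 + 1 from rfl, cnt_succ, hc2]
  have hc4 : cnt f 4 = (f 0).toNat + (f 1).toNat + (f 2).toNat + (f 3).toNat := by
    rw [show (4:ℕ) = 3 + 1 from rfl, cnt_succ, hc3]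
  have hc5 : cnt f 5 = (f 0).toNat + (f 1).toNat + (f 2).toNat + (f 3).toNat + (f 4).toNat := by
    rw [show (5:ℕ) = 4 + 1 from rfl, cnt_succ, hc4]
  interval_cases n
  · have H0 := hv 0 (by norm_num)
    rw [hc1]
    cases h0 : f 0 <;> simp_all
  · have H0 := hv 0 (by norm_num); have H1 := hv 1 (by norm_num)
    rw [hc2]
    cases h0 : f 0 <;> cases h1' : f 1 <;> simp_all
  · have H0 := hv 0 (by norm_num); have H1 := hv 1 (by norm_num); have H2 := hv 2 (by norm_num)
    rw [hc3]
    cases h0 : f 0 <;> cases h1' : f 1 <;> cases h2 : f 2 <;> simp_all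
  · have H0 := hv 0 (by norm_num); have H1 := hv 1 (by norm_num); have H2 := hv 2 (by norm_num)
    have H3 := hv 3 (by norm_num)
    rw [hc4]
    cases h0 : f 0 <;> cases h1' : f 1 <;> cases h2 : f 2 <;> cases h3 : f 3 <;> simp_all
  · have H0 := hv 0 (by norm_num); have H1 := hv 1 (by norm_num); have H2 := hv 2 (by norm_num)
    have H3 := hv 3 (by norm_num); have H4 := hv 4 (by norm_num)
    rw [hc5]
    cases h0 : f 0 <;> cases h1' : f 1 <;> cases h2 : f 2 <;> cases h3 : f 3 <;> cases h4 : f 4 <;>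
      simp_all

/-! ### The optimal pattern -/

def pat (n : ℕ) : ℕ → Bool := fun i =>
  decide ((i + n % 7 % 2) % 7 = 1 ∨ (i + n % 7 % 2) % 7 = 3 ∨ (i + n % 7 % 2) % 7 = 5)

set_option maxHeartbeats 1600000 in
lemma pat_valid (n : ℕ) : Valid n (pat n) := by
  intro u hu hfu
  simp only [pat, decide_eq_false_iff_not, decide_eq_true_eq] at hfu ⊢
  have hs : n % 7 % 2 = 0 ∨ n % 7 % 2 = 1 := by omega
  rcases hs with hs | hs <;> simp only [hs] at hfu ⊢ <;> omega

lemma pat_cnt_aux (n : ℕ) : ∀ m : ℕ,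
    cnt (pat n) m = 3 * ((m + n % 7 % 2) / 7) + ((m + n % 7 % 2) % 7) / 2 := by
  intro m
  induction m with
  | zero => rw [cnt_zero]; omega
  | succ m ih =>
    rw [cnt_succ, ih]
    by_cases h : ((m + n % 7 % 2) % 7 = 1 ∨ (m + n % 7 % 2) % 7 = 3 ∨ (m + n % 7 % 2) % 7 = 5)
    · rw [show pat n m = true by simp only [pat, decide_eq_true_eq]; exact h]
      simp only [Bool.toNat_true]
      omega
    · rw [show pat n m = false by simp only [pat, decide_eq_false_iff_not]; exact h]
      simp only [Bool.toNat_false]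
      omega

lemma pat_cnt (n : ℕ) : cnt (pat n) n = (3 * n + 6) / 7 := by
  rw [pat_cnt_aux]
  have h : n % 7 = 0 ∨ n % 7 = 1 ∨ n % 7 = 2 ∨ n % 7 = 3 ∨ n % 7 = 4 ∨ n % 7 = 5 ∨
      n % 7 = 6 := by omega
  rcases h with h | h | h | h | h | h | h <;> simp only [h] <;> omega

/-- For the path `Pₙ` on `n ≥ 1` vertices, `γₛ(Pₙ) = ⌈3n/7⌉`. -/
theorem stmt_1 (n : ℕ) (hn : 1 ≤ n) :
    secDomNum (SimpleGraph.pathGraph n) = (3 * n + 6) / 7 := by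
  classical
  have hmem : (3 * n + 6) / 7 ∈
      {m | ∃ D : Set (Fin n), SecureDominates (SimpleGraph.pathGraph n) D ∧ D.ncard = m} := by
    refine ⟨{v : Fin n | pat n v.val = true}, ?_, ?_⟩
    · exact valid_to_secure (fun v => Iff.rfl) (pat_valid n)
    · exact (ncard_eq_cnt (f := pat n) (fun v => Iff.rfl)).trans (pat_cnt n)
  apply le_antisymm
  · exact Nat.sInf_le hmem
  · apply le_csInf ⟨_, hmem⟩
    rintro b ⟨D, hsec, rfl⟩
    set f : ℕ → Bool := fun i => decide (∃ h : i < n, (⟨i, h⟩ : Fin n) ∈ D) with hfdef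
    have hf : ∀ v : Fin n, v ∈ D ↔ f v.val = true := by
      intro v
      simp only [hfdef, decide_eq_true_eq]
      constructor
      · intro h
        exact ⟨v.isLt, by simpa using h⟩
      · rintro ⟨h, hm⟩
        simpa using hm
    have hv := secure_to_valid hf hsec
    rw [ncard_eq_cnt hf]
    have hlow : 3 * n ≤ 7 * cnt f n := by
      by_cases h6 : 6 ≤ n
      · exact lower_ge_six hv h6
      · exact lower_small hv hn (by omega)
    omega
end

section
/- Let G be a finite simple connected graph that is not a star graph. Then the secure domination number of the 2-subdivision G^{1/2} satisfies γ_s(G^{1/2}) ≤ min{|E(G)|, |V(G)|}. -/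
open SimpleGraph

set_option linter.unusedSectionVars false
section Aux
variable {V : Type*} [LinearOrder V] {G : SimpleGraph V}

lemma adj_lr (u : V) (e : OEdge G) (i : Fin (2-1)) :
    (Subdiv G 2).Adj (Sum.inl u) (Sum.inr (e, i)) ↔ u = e.val.1 ∨ u = e.val.2 := by
  have hi : i.val = 0 := by omega
  simp [Subdiv, SimpleGraph.fromRel_adj, hi]

/-- the oriented edge associated to an adjacency -/
def oedgeOf {u v : V} (h : G.Adj u v) : OEdge G :=
  if hlt : u < v then ⟨(u, v), h, hlt⟩ else ⟨(v, u), h.symm, (h.ne.lt_or_gt).resolve_left hlt⟩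

lemma oedgeOf_pair {u v : V} (h : G.Adj u v) :
    ((oedgeOf h).val.1 = u ∧ (oedgeOf h).val.2 = v) ∨
    ((oedgeOf h).val.1 = v ∧ (oedgeOf h).val.2 = u) := by
  unfold oedgeOf; split_ifs <;> simp

lemma oedgeOf_mem {u v : V} (h : G.Adj u v) :
    u = (oedgeOf h).val.1 ∨ u = (oedgeOf h).val.2 := by
  rcases oedgeOf_pair h with ⟨h1, h2⟩ | ⟨h1, h2⟩
  · exact Or.inl h1.symm
  · exact Or.inr h2.symm

lemma exists_adj (hconn : G.Connected) [Nontrivial V] (v : V) : ∃ w, G.Adj v w := by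
  obtain ⟨u, hu⟩ := exists_ne v
  obtain ⟨p⟩ := hconn.preconnected v u
  cases p with
  | nil => exact absurd rfl hu.symm
  | cons h _ => exact ⟨_, h⟩

lemma exists_incident (hconn : G.Connected) [Nontrivial V] (v : V) :
    ∃ e : OEdge G, v = e.val.1 ∨ v = e.val.2 := by
  obtain ⟨w, hw⟩ := exists_adj hconn v
  exact ⟨oedgeOf hw, oedgeOf_mem hw⟩

lemma nontrivial_of_not_star (hconn : G.Connected) (hstar : ¬ IsStar G) : Nontrivial V := by
  by_contra h
  rw [not_nontrivial_iff_subsingleton] at h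
  have : Nonempty V := hconn.nonempty
  refine hstar ⟨Classical.arbitrary V, fun u v => ?_⟩
  constructor
  · intro hadj; exact absurd (Subsingleton.elim u v) hadj.ne
  · rintro ⟨h1, _⟩; exact absurd (Subsingleton.elim u v) h1

lemma exists_two_step (hconn : G.Connected) (hstar : ¬ IsStar G) (v : V) :
    ∃ w, G.Adj v w ∧ ∃ x, G.Adj w x ∧ x ≠ v := by
  by_contra hneg
  push_neg at hneg
  have key : ∀ (a : V) (p : G.Walk a v), a = v ∨ G.Adj v a := by
    intro a p
    induction p with
    | nil => exact Or.inl rfl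
    | cons h p ih =>
      rcases ih hneg with rfl | hvb
      · exact Or.inr h.symm
      · exact Or.inl (hneg _ hvb _ h.symm)
  refine hstar ⟨v, fun u u' => ?_⟩
  constructor
  · intro hadj
    refine ⟨hadj.ne, ?_⟩
    by_contra hc
    push_neg at hc
    obtain ⟨hu, hu'⟩ := hc
    have h1 : G.Adj v u := (key u ((hconn.preconnected u v).some)).resolve_left hu
    exact hu' (hneg u h1 u' hadj)
  · rintro ⟨hne, h | h⟩
    · have h2 : G.Adj v u' :=
        (key u' ((hconn.preconnected u' v).some)).resolve_left
          (fun hh => hne (h.trans hh.symm))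
      rw [h]; exact h2
    · have h2 : G.Adj v u :=
        (key u ((hconn.preconnected u v).some)).resolve_left
          (fun hh => hne (hh.trans h.symm))
      rw [h]; exact h2.symm

end Aux

/-- If `G` is a finite simple connected graph that is not a star, then
`γₛ(G^{1/2}) ≤ min {|E(G)|, |V(G)|}`. -/
theorem stmt_2 {V : Type*} [Fintype V] [LinearOrder V] (G : SimpleGraph V)
    (hconn : G.Connected) (hstar : ¬ IsStar G) :
    secDomNum (Subdiv G 2) ≤ min (Nat.card G.edgeSet) (Nat.card V) := by
  have hnt : Nontrivial V := nontrivial_of_not_star hconn hstar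
  refine le_min ?_ ?_
  · -- edge bound: take all subdivision (edge) vertices
    set D : Set (V ⊕ (OEdge G × Fin (2 - 1))) := Set.range Sum.inr with hD
    have hdom : Dominates (Subdiv G 2) D := by
      rintro (v | x) hz
      · obtain ⟨e, he⟩ := exists_incident hconn v
        exact ⟨Sum.inr (e, 0), ⟨_, rfl⟩, ((adj_lr v e 0).mpr he).symm⟩
      · exact absurd ⟨x, rfl⟩ hz
    have hsec : SecureDominates (Subdiv G 2) D := by
      refine ⟨hdom, ?_⟩
      rintro (v | x) hu
      swap
      · exact absurd ⟨x, rfl⟩ hu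
      obtain ⟨w, hvw, x, hwx, hxv⟩ := exists_two_step hconn hstar v
      set e : OEdge G := oedgeOf hvw with hedef
      set f : OEdge G := oedgeOf hwx with hfdef
      have hev : v = e.val.1 ∨ v = e.val.2 := oedgeOf_mem hvw
      have hfw : w = f.val.1 ∨ w = f.val.2 := oedgeOf_mem hwx
      have hfe : f ≠ e := by
        intro h
        rcases oedgeOf_pair hvw with ⟨h1, h2⟩ | ⟨h1, h2⟩ <;>
          rcases oedgeOf_pair hwx with ⟨h3, h4⟩ | ⟨h3, h4⟩ <;>
          rw [← hedef] at h1 h2 <;> rw [← hfdef] at h3 h4 <;> rw [h] at h3 h4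
        · exact hvw.ne (h1.symm.trans h3)
        · exact hxv (h3.symm.trans h1)
        · exact hxv (h4.symm.trans h2)
        · exact hwx.ne ((h3.symm.trans h1).symm)
      refine ⟨Sum.inr (e, 0), ⟨_, rfl⟩, (adj_lr v e 0).mpr hev, ?_⟩
      rintro (y | ⟨g, j⟩) hz
      · -- y is an original vertex, y ≠ v
        have hyv : y ≠ v := fun h => hz (Or.inr (by rw [h]; rfl))
        by_cases hyw : y = w
        · refine ⟨Sum.inr (f, 0), Or.inl ⟨⟨_, rfl⟩, by simp [hfe]⟩,
            ((adj_lr y f 0).mpr ?_).symm⟩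
          rw [hyw]; exact hfw
        · obtain ⟨g, hg⟩ := exists_incident hconn y
          have hge : g ≠ e := by
            intro h
            rcases oedgeOf_pair hvw with ⟨h1, h2⟩ | ⟨h1, h2⟩ <;>
              rw [← hedef] at h1 h2 <;> rw [h] at hg <;>
              rcases hg with h3 | h3
            · exact hyv (h3.trans h1)
            · exact hyw (h3.trans h2)
            · exact hyw (h3.trans h1)
            · exact hyv (h3.trans h2)
          exact ⟨Sum.inr (g, 0), Or.inl ⟨⟨_, rfl⟩, by simp [hge]⟩,
            ((adj_lr y g 0).mpr hg).symm⟩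
      · -- an edge vertex outside the swapped set must be (e, 0) itself
        have hge : (g, j) = (e, (0 : Fin (2 - 1))) := by
          by_contra hne
          exact hz (Or.inl ⟨⟨_, rfl⟩, by simp [hne]⟩)
        obtain ⟨hg, hj⟩ := Prod.ext_iff.mp hge
        subst hg; subst hj
        exact ⟨Sum.inl v, Or.inr rfl, (adj_lr v e 0).mpr hev⟩
    calc secDomNum (Subdiv G 2) ≤ D.ncard := Nat.sInf_le ⟨D, hsec, rfl⟩
      _ = Nat.card (OEdge G × Fin (2 - 1)) := by
          rw [hD, ← Set.image_univ, Set.ncard_image_of_injective _ Sum.inr_injective,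
            Set.ncard_univ]
      _ = Nat.card (OEdge G) := by simp [Nat.card_prod]
      _ ≤ Nat.card G.edgeSet := by
          refine Nat.card_le_card_of_injective
            (fun e => ⟨s(e.val.1, e.val.2), e.2.1⟩) ?_
          rintro ⟨⟨a, b⟩, hab, hab2⟩ ⟨⟨c, d⟩, hcd, hcd2⟩ h
          have h' : s(a, b) = s(c, d) := congrArg Subtype.val h
          rcases Sym2.eq_iff.mp h' with ⟨rfl, rfl⟩ | ⟨rfl, rfl⟩
          · rfl
          · exact absurd (hab2.trans hcd2) (lt_irrefl _)
  · -- vertex bound: take all original vertices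
    set D : Set (V ⊕ (OEdge G × Fin (2 - 1))) := Set.range Sum.inl with hD
    have hdom : Dominates (Subdiv G 2) D := by
      rintro (v | ⟨e, i⟩) hz
      · exact absurd ⟨v, rfl⟩ hz
      · exact ⟨Sum.inl e.val.1, ⟨_, rfl⟩, (adj_lr _ e i).mpr (Or.inl rfl)⟩
    have hsec : SecureDominates (Subdiv G 2) D := by
      refine ⟨hdom, ?_⟩
      rintro (v | ⟨e, i⟩) hu
      · exact absurd ⟨v, rfl⟩ hu
      refine ⟨Sum.inl e.val.1, ⟨_, rfl⟩, ((adj_lr _ e i).mpr (Or.inl rfl)).symm, ?_⟩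
      rintro (y | ⟨g, j⟩) hz
      · have hy : y = e.val.1 := by
          by_contra hne
          exact hz (Or.inl ⟨⟨y, rfl⟩, by simp [hne]⟩)
        exact ⟨Sum.inr (e, i), Or.inr rfl, ((adj_lr y e i).mpr (Or.inl hy)).symm⟩
      · by_cases hc : g.val.1 = e.val.1
        · have h2 : g.val.2 ≠ e.val.1 := fun h => absurd (hc ▸ h ▸ g.2.2) (lt_irrefl _)
          exact ⟨Sum.inl g.val.2, Or.inl ⟨⟨_, rfl⟩, by simp [h2]⟩,
            (adj_lr _ g j).mpr (Or.inr rfl)⟩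
        · exact ⟨Sum.inl g.val.1, Or.inl ⟨⟨_, rfl⟩, by simp [hc]⟩,
            (adj_lr _ g j).mpr (Or.inl rfl)⟩
    calc secDomNum (Subdiv G 2) ≤ D.ncard := Nat.sInf_le ⟨D, hsec, rfl⟩
      _ = Nat.card V := by
          rw [hD, ← Set.image_univ, Set.ncard_image_of_injective _ Sum.inl_injective,
            Set.ncard_univ]
end

section
/- For the star graph S_n = K_{1,n−1} with n ≥ 2 vertices, the secure domination number of its 2-subdivision equals n, i.e., γ_s(S_n^{1/2}) = n. -/
open SimpleGraph

section helpers
variable {n : ℕ}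

lemma star_adj (a b : Fin n) : (_root_.starGraph n).Adj a b ↔ a ≠ b ∧ (a.val = 0 ∨ b.val = 0) := by
  simp [_root_.starGraph]

lemma oedge_fst (e : OEdge (_root_.starGraph n)) : e.val.1.val = 0 ∧ e.val.2.val ≠ 0 := by
  obtain ⟨⟨a, b⟩, hadj, hlt⟩ := e
  rw [star_adj] at hadj
  simp only [Fin.lt_def] at hlt
  simp only [ne_eq, Fin.ext_iff] at hadj ⊢
  omega

lemma subdiv_adj_inl_inr (u : Fin n) (e : OEdge (_root_.starGraph n)) (i : Fin 1) :
    (Subdiv (_root_.starGraph n) 2).Adj (Sum.inl u) (Sum.inr (e, i)) ↔ (u = e.val.1 ∨ u = e.val.2) := by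
  simp [Subdiv, SimpleGraph.fromRel_adj]

lemma subdiv_not_adj_inl_inl (u v : Fin n) :
    ¬ (Subdiv (_root_.starGraph n) 2).Adj (Sum.inl u) (Sum.inl v) := by
  simp [Subdiv, SimpleGraph.fromRel_adj]

lemma subdiv_not_adj_inr_inr (x y : OEdge (_root_.starGraph n) × Fin 1) :
    ¬ (Subdiv (_root_.starGraph n) 2).Adj (Sum.inr x) (Sum.inr y) := by
  obtain ⟨e, i⟩ := x; obtain ⟨f, j⟩ := y
  simp [Subdiv, SimpleGraph.fromRel_adj]

end helpers
section helpers2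
variable {n : ℕ} [NeZero n]

/-- The oriented edge of the star from the centre to a nonzero vertex `v`. -/
def ev (v : Fin n) (hv : v ≠ 0) : OEdge (_root_.starGraph n) :=
  ⟨(0, v), by
    constructor
    · rw [star_adj]
      exact ⟨fun h => hv h.symm, Or.inl (Fin.val_zero n)⟩
    · rw [Fin.lt_def, Fin.val_zero]
      exact Nat.pos_of_ne_zero fun h => hv (Fin.ext (by simpa using h))⟩

lemma ev_snd (v : Fin n) (hv : v ≠ 0) : (ev v hv).val.2 = v := rfl

lemma oedge_eq_ev (e : OEdge (_root_.starGraph n)) (hv : e.val.2 ≠ 0) : e = ev e.val.2 hv := by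
  have h := oedge_fst e
  apply Subtype.ext
  apply Prod.ext
  · exact Fin.ext (h.1.trans (Fin.val_zero n).symm)
  · rfl

/-- Neighbours of a leaf `inl v` (`v ≠ 0`) are exactly the midpoint of its edge. -/
lemma adj_leaf (v : Fin n) (hv : v ≠ 0) (x : Fin n ⊕ (OEdge (_root_.starGraph n) × Fin 1)) :
    (Subdiv (_root_.starGraph n) 2).Adj x (Sum.inl v) ↔ x = Sum.inr (ev v hv, 0) := by
  constructor
  · intro h
    match x with
    | Sum.inl u => exact absurd h (subdiv_not_adj_inl_inl u v)
    | Sum.inr (e, i) =>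
      rw [SimpleGraph.adj_comm, subdiv_adj_inl_inr] at h
      have hf := oedge_fst e
      have h2 : e.val.2 = v := by
        rcases h with h | h
        · exfalso; apply hv; apply Fin.ext; rw [Fin.ext_iff] at h; simp only [Fin.val_zero]; omega
        · exact h.symm
      subst h2
      have : e = ev e.val.2 hv := oedge_eq_ev e hv
      rw [Subsingleton.elim i 0, ← this]
  · rintro rfl
    rw [SimpleGraph.adj_comm, subdiv_adj_inl_inr]
    exact Or.inr rfl

end helpers2
lemma card_le_of_inj {m : ℕ} {W : Type*} [Finite W] (D : Set W) (f : Fin m → W)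
    (hf : Function.Injective f) (hfD : ∀ v, f v ∈ D) : m ≤ D.ncard := by
  have hsub : Set.range f ⊆ D := Set.range_subset_iff.2 hfD
  have : (Set.range f).ncard = m := by
    rw [← Set.image_univ, Set.ncard_image_of_injective _ hf, Set.ncard_univ,
      Nat.card_eq_fintype_card, Fintype.card_fin]
  rw [← this]
  exact Set.ncard_le_ncard hsub D.toFinite

section upper
variable {n : ℕ} [NeZero n]

lemma upper_mem :
    SecureDominates (Subdiv (_root_.starGraph n) 2)
      (Set.range (Sum.inl : Fin n → Fin n ⊕ (OEdge (_root_.starGraph n) × Fin 1))) := by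
  constructor
  · rintro (u | ⟨e, i⟩) hu
    · exact absurd ⟨u, rfl⟩ hu
    · refine ⟨Sum.inl e.val.1, ⟨_, rfl⟩, ?_⟩
      rw [subdiv_adj_inl_inr]; exact Or.inl rfl
  · rintro (u | ⟨e, i⟩) hu
    · exact absurd ⟨u, rfl⟩ hu
    · refine ⟨Sum.inl e.val.2, ⟨_, rfl⟩, ?_⟩
      constructor
      · rw [SimpleGraph.adj_comm, subdiv_adj_inl_inr]; exact Or.inr rfl
      · rintro (w | ⟨f, j⟩) hw
        · by_cases hwe : w = e.val.2
          · subst hwe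
            refine ⟨Sum.inr (e, i), Or.inr rfl, ?_⟩
            rw [SimpleGraph.adj_comm, subdiv_adj_inl_inr]; exact Or.inr rfl
          · exact absurd (Or.inl ⟨⟨w, rfl⟩, by simp [hwe]⟩) hw
        · refine ⟨Sum.inl e.val.1, Or.inl ⟨⟨_, rfl⟩, ?_⟩, ?_⟩
          · have h1 := oedge_fst e
            simp only [Set.mem_singleton_iff, Sum.inl.injEq]
            intro h; rw [Fin.ext_iff] at h; omega
          · rw [subdiv_adj_inl_inr]
            left
            have h1 := oedge_fst e
            have h2 := oedge_fst f
            apply Fin.ext; omega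

lemma upper_card :
    (Set.range (Sum.inl : Fin n → Fin n ⊕ (OEdge (_root_.starGraph n) × Fin 1))).ncard = n := by
  rw [← Set.image_univ, Set.ncard_image_of_injective _ Sum.inl_injective, Set.ncard_univ,
    Nat.card_eq_fintype_card, Fintype.card_fin]

end upper
section lower
variable {n : ℕ} [NeZero n]

open Classical in
lemma inj_helper (D : Set (Fin n ⊕ (OEdge (_root_.starGraph n) × Fin 1)))
    (z : Fin n ⊕ (OEdge (_root_.starGraph n) × Fin 1))
    (hz : ∀ (b : Fin n) (hb : b ≠ 0), (Sum.inl b ∈ D → z ≠ Sum.inl b) ∧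
      (Sum.inl b ∉ D → z ≠ Sum.inr (ev b hb, 0))) :
    Function.Injective (fun v : Fin n => if hv : v = 0 then z else
      if Sum.inl v ∈ D then Sum.inl v else Sum.inr (ev v hv, 0)) := by
  intro a b hab
  dsimp only at hab
  by_cases h1 : a = 0 <;> by_cases h2 : b = 0
  · rw [h1, h2]
  · rw [dif_pos h1, dif_neg h2] at hab
    by_cases h3 : Sum.inl b ∈ D
    · rw [if_pos h3] at hab; exact absurd hab ((hz b h2).1 h3)
    · rw [if_neg h3] at hab; exact absurd hab ((hz b h2).2 h3)
  · rw [dif_neg h1, dif_pos h2] at hab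
    by_cases h3 : Sum.inl a ∈ D
    · rw [if_pos h3] at hab; exact absurd hab.symm ((hz a h1).1 h3)
    · rw [if_neg h3] at hab; exact absurd hab.symm ((hz a h1).2 h3)
  · rw [dif_neg h1, dif_neg h2] at hab
    by_cases h3 : Sum.inl a ∈ D <;> by_cases h4 : Sum.inl b ∈ D
    · rw [if_pos h3, if_pos h4] at hab; exact Sum.inl.inj hab
    · rw [if_pos h3, if_neg h4] at hab; simp at hab
    · rw [if_neg h3, if_pos h4] at hab; simp at hab
    · rw [if_neg h3, if_neg h4] at hab
      exact congrArg (fun p : OEdge (_root_.starGraph n) × Fin 1 => p.1.val.2) (Sum.inr.inj hab)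

lemma lower_bound (D : Set (Fin n ⊕ (OEdge (_root_.starGraph n) × Fin 1)))
    (hD : SecureDominates (Subdiv (_root_.starGraph n) 2) D) : n ≤ D.ncard := by
  classical
  have hpick : ∀ (v : Fin n) (hv : v ≠ 0), Sum.inl v ∉ D →
      Sum.inr ((ev v hv : OEdge (_root_.starGraph n)), (0 : Fin 1)) ∈ D := by
    intro v hv hnot
    obtain ⟨u, huD, hadj⟩ := hD.1 (Sum.inl v) hnot
    rw [adj_leaf v hv] at hadj
    rwa [hadj] at huD
  have hmemf : ∀ (z : Fin n ⊕ (OEdge (_root_.starGraph n) × Fin 1)), z ∈ D → ∀ v : Fin n,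
      (if hv : v = 0 then z else
        if Sum.inl v ∈ D then Sum.inl v else Sum.inr (ev v hv, 0)) ∈ D := by
    intro z hzD v
    split_ifs with h1 h2
    · exact hzD
    · exact h2
    · exact hpick v h1 h2
  by_cases h0 : Sum.inl (0 : Fin n) ∈ D
  · refine card_le_of_inj D _ (inj_helper D (Sum.inl 0) ?_) (hmemf _ h0)
    intro b hb
    refine ⟨fun _ h => hb (Sum.inl.inj h).symm, fun _ h => by simp at h⟩
  · obtain ⟨u, huD, hadj, hdom⟩ := hD.2 (Sum.inl 0) h0
    obtain (x | ⟨e, i⟩) := u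
    · exact absurd hadj (subdiv_not_adj_inl_inl 0 x)
    · set w := e.val.2 with hwdef
      have hw : w ≠ 0 := fun h => (oedge_fst e).2 (by rw [← hwdef, h, Fin.val_zero])
      have he : e = ev w hw := oedge_eq_ev e hw
      have hwD : Sum.inl w ∈ D := by
        by_contra hcon
        have hw' : Sum.inl w ∉ (D \ {Sum.inr (e, i)}) ∪ {Sum.inl (0 : Fin n)} := by
          rintro (⟨hmem, -⟩ | hs)
          · exact hcon hmem
          · rw [Set.mem_singleton_iff, Sum.inl.injEq] at hs
            exact hw hs
        obtain ⟨u', hu'D, hadj'⟩ := hdom (Sum.inl w) hw'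
        rw [adj_leaf w hw] at hadj'
        subst hadj'
        rw [← he, Subsingleton.elim (0 : Fin 1) i] at hu'D
        rcases hu'D with ⟨-, hne⟩ | hs
        · exact hne rfl
        · simp at hs
      have hmD : Sum.inr ((ev w hw : OEdge (_root_.starGraph n)), (0 : Fin 1)) ∈ D := by
        rw [← he, Subsingleton.elim (0 : Fin 1) i]; exact huD
      refine card_le_of_inj D _ (inj_helper D (Sum.inr (ev w hw, 0)) ?_) (hmemf _ hmD)
      intro b hb
      constructor
      · intro _ h; simp at h
      · intro hbD h
        have : w = b := congrArg (fun p : OEdge (_root_.starGraph n) × Fin 1 => p.1.val.2) (Sum.inr.inj h)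
        exact hbD (this ▸ hwD)

end lower

/-- For the star `Sₙ = K_{1,n-1}` with `n ≥ 2` vertices, `γₛ(Sₙ^{1/2}) = n`. -/
theorem stmt_3 (n : ℕ) (hn : 2 ≤ n) :
    secDomNum (Subdiv (_root_.starGraph n) 2) = n := by
  haveI : NeZero n := ⟨by omega⟩
  have hmem : n ∈ {m | ∃ D : Set (Fin n ⊕ (OEdge (_root_.starGraph n) × Fin 1)),
      SecureDominates (Subdiv (_root_.starGraph n) 2) D ∧ D.ncard = m} :=
    ⟨_, upper_mem, upper_card⟩
  refine le_antisymm (Nat.sInf_le hmem) (le_csInf ⟨n, hmem⟩ ?_)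
  rintro m ⟨D, hD, rfl⟩
  exact lower_bound D hD
end

section
/- For any finite simple graph G, the domination number of the 3-subdivision satisfies γ(G^{1/3}) = |V(G)|; in particular every dominating set of G^{1/3} has at least |V(G)| vertices. -/
open SimpleGraph

/-- For any finite simple graph `G`, `γ(G^{1/3}) = |V(G)|`; in particular every
dominating set of `G^{1/3}` has at least `|V(G)|` vertices. -/
theorem stmt_6 {V : Type*} [Fintype V] [LinearOrder V] (G : SimpleGraph V) :
    domNum (Subdiv G 3) = Nat.card V ∧
    ∀ D : Set (V ⊕ (OEdge G × Fin (3 - 1))), Dominates (Subdiv G 3) D →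
      Nat.card V ≤ D.ncard := by
  classical
  have key : ∀ D : Set (V ⊕ (OEdge G × Fin (3 - 1))), Dominates (Subdiv G 3) D →
      Nat.card V ≤ D.ncard := by
    intro D hD
    have hchoice : ∀ v : V, ∃ x ∈ D, x = Sum.inl v ∨
        ∃ e : OEdge G, ∃ i : Fin (3 - 1), x = Sum.inr (e, i) ∧
          ((i.val = 0 ∧ v = e.val.1) ∨ (i.val = 1 ∧ v = e.val.2)) := by
      intro v
      by_cases hv : Sum.inl v ∈ D
      · exact ⟨_, hv, Or.inl rfl⟩
      · obtain ⟨u, huD, hadj⟩ := hD _ hv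
        refine ⟨u, huD, Or.inr ?_⟩
        rcases u with w | ⟨e, i⟩
        · simp [Subdiv, SimpleGraph.fromRel_adj] at hadj
        · refine ⟨e, i, rfl, ?_⟩
          simp [Subdiv, SimpleGraph.fromRel_adj] at hadj
          have h0 : i = 0 ↔ i.val = 0 := Fin.ext_iff
          rw [h0] at hadj
          tauto
    choose f hfD hf using hchoice
    have hinj : Function.Injective f := by
      intro v w hvw
      rcases hf v with h1 | ⟨e, i, he, hc⟩ <;> rcases hf w with h2 | ⟨e', i', he', hc'⟩
      · rw [h1, h2] at hvw; exact Sum.inl.inj hvw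
      · rw [h1, he'] at hvw; exact absurd hvw (by simp)
      · rw [he, h2] at hvw; exact absurd hvw (by simp)
      · rw [he, he'] at hvw
        obtain ⟨hee, hii⟩ : e = e' ∧ i = i' := by
          have := Sum.inr.inj hvw
          exact ⟨congrArg Prod.fst this, congrArg Prod.snd this⟩
        subst hee; subst hii
        rcases hc with ⟨hi, hv⟩ | ⟨hi, hv⟩ <;> rcases hc' with ⟨hi', hv'⟩ | ⟨hi', hv'⟩
        · rw [hv, hv']
        · omega
        · omega
        · rw [hv, hv']
    calc Nat.card V ≤ Nat.card D :=
          Nat.card_le_card_of_injective (fun v => (⟨f v, hfD v⟩ : D))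
            (fun v w h => hinj (congrArg Subtype.val h))
      _ = D.ncard := Nat.card_coe_set_eq D
  refine ⟨?_, key⟩
  have hmem : (Nat.card V) ∈ {n | ∃ D : Set (V ⊕ (OEdge G × Fin (3 - 1))),
      Dominates (Subdiv G 3) D ∧ D.ncard = n} := by
    refine ⟨Set.range Sum.inl, ?_, ?_⟩
    · intro x hx
      rcases x with v | ⟨e, i⟩
      · exact absurd (Set.mem_range_self v) hx
      · by_cases hi : i.val = 0
        · refine ⟨Sum.inl e.val.1, Set.mem_range_self _, ?_⟩
          simp [Subdiv, SimpleGraph.fromRel_adj, hi]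
          exact Fin.ext hi
        · have hi1 : i.val = 1 := by omega
          refine ⟨Sum.inl e.val.2, Set.mem_range_self _, ?_⟩
          simp [Subdiv, SimpleGraph.fromRel_adj, hi1]
    · rw [← Nat.card_coe_set_eq]
      exact Nat.card_range_of_injective Sum.inl_injective
  refine le_antisymm (Nat.sInf_le hmem) ?_
  obtain ⟨D, hDdom, hDcard⟩ := Nat.sInf_mem ⟨_, hmem⟩
  rw [domNum, ← hDcard]
  exact key D hDdom
end

section
/- For every star graph S_n = K_{1,n−1} with n ≥ 2, γ_s(S_n^{1/5}) = 3|E(S_n)| − Δ(S_n) + 1 = 3(n−1) − (n−1) + 1 = 2(n−1) + 1. -/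
open SimpleGraph

namespace Stmt12

abbrev OE (n : ℕ) := OEdge (_root_.starGraph n)
abbrev W (n : ℕ) : Type := Fin n ⊕ (OE n × Fin 4)
abbrev SG (n : ℕ) : SimpleGraph (W n) := Subdiv (_root_.starGraph n) 5

variable {n : ℕ}

lemma star_adj {a b : Fin n} : (_root_.starGraph n).Adj a b ↔ a ≠ b ∧ (a.val = 0 ∨ b.val = 0) := by
  simp [_root_.starGraph]

lemma oe_fst (e : OE n) : e.val.1.val = 0 := by
  obtain ⟨⟨a, b⟩, hadj, hlt⟩ := e
  rw [star_adj] at hadj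
  rw [Fin.lt_def] at hlt
  rcases hadj.2 with h | h
  · exact h
  · omega

lemma oe_snd (e : OE n) : e.val.2.val ≠ 0 := by
  have h1 := oe_fst e
  have h2 := e.prop.2
  rw [Fin.lt_def] at h2
  omega

set_option maxRecDepth 4000 in
lemma adj_inl_inr {u : Fin n} {e : OE n} {i : Fin 4} :
    (SG n).Adj (Sum.inl u) (Sum.inr (e, i)) ↔
      (i.val = 0 ∧ u = e.val.1) ∨ (i.val = 3 ∧ u = e.val.2) := by
  simp [SG, Subdiv, SimpleGraph.fromRel_adj]


set_option maxRecDepth 4000 in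
lemma adj_inr_inr {e f : OE n} {i j : Fin 4} :
    (SG n).Adj (Sum.inr (e, i)) (Sum.inr (f, j)) ↔
      e = f ∧ (i.val + 1 = j.val ∨ j.val + 1 = i.val) := by
  simp only [SG, Subdiv, SimpleGraph.fromRel_adj]
  constructor
  · rintro ⟨hne, (⟨rfl, h⟩ | ⟨rfl, h⟩)⟩
    · exact ⟨rfl, Or.inl h⟩
    · exact ⟨rfl, Or.inr h⟩
  · rintro ⟨rfl, (h | h)⟩
    · refine ⟨?_, Or.inl ⟨rfl, h⟩⟩
      simp only [ne_eq, Sum.inr.injEq, Prod.mk.injEq, true_and]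
      intro hij; rw [hij] at h; omega
    · refine ⟨?_, Or.inr ⟨rfl, h⟩⟩
      simp only [ne_eq, Sum.inr.injEq, Prod.mk.injEq, true_and]
      intro hij; rw [hij] at h; omega

set_option maxRecDepth 4000 in
lemma adj_inl_inl {u v : Fin n} : ¬ (SG n).Adj (Sum.inl u) (Sum.inl v) := by
  simp [SG, Subdiv, SimpleGraph.fromRel_adj]

lemma adj_inr_inl {u : Fin n} {e : OE n} {i : Fin 4} :
    (SG n).Adj (Sum.inr (e, i)) (Sum.inl u) ↔
      (i.val = 0 ∧ u = e.val.1) ∨ (i.val = 3 ∧ u = e.val.2) := by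
  rw [SimpleGraph.adj_comm]; exact adj_inl_inr

lemma oe_ext {e f : OE n} (h : e.val.2 = f.val.2) : e = f := by
  apply Subtype.ext
  apply Prod.ext _ h
  apply Fin.ext
  rw [oe_fst e, oe_fst f]

def mkOE (v : Fin n) (hv : v.val ≠ 0) : OE n :=
  ⟨(⟨0, Fin.pos v⟩, v), ⟨star_adj.mpr ⟨fun h => hv ((congrArg Fin.val h).symm), Or.inl rfl⟩,
    by rw [Fin.lt_def]; simpa using Nat.pos_of_ne_zero hv⟩⟩

@[simp] lemma mkOE_snd (v : Fin n) (hv : v.val ≠ 0) : (mkOE v hv).val.2 = v := rfl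

def oeEquiv : OE n ≃ {v : Fin n // v.val ≠ 0} where
  toFun e := ⟨e.val.2, oe_snd e⟩
  invFun v := mkOE v.1 v.2
  left_inv e := oe_ext rfl
  right_inv v := rfl

lemma card_oe (hn : 2 ≤ n) : Nat.card (OE n) = n - 1 := by
  haveI : NeZero n := ⟨by omega⟩
  rw [Nat.card_congr oeEquiv]
  have : ∀ v : Fin n, v.val ≠ 0 ↔ v ≠ 0 := fun v => by
    simp only [ne_eq, Fin.ext_iff, Fin.val_zero]
  rw [Nat.card_congr (Equiv.subtypeEquivRight this)]
  simp [Nat.card_eq_fintype_card]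

def Dstd (n : ℕ) : Set (W n) :=
  Set.range Sum.inl ∪ Set.range (fun e : OE n => Sum.inr (e, (1 : Fin 4)))

@[simp] lemma mem_Dstd_inl (v : Fin n) : Sum.inl v ∈ Dstd n := Or.inl ⟨v, rfl⟩

@[simp] lemma mem_Dstd_inr (e : OE n) (i : Fin 4) : Sum.inr (e, i) ∈ Dstd n ↔ i = 1 := by
  constructor
  · rintro (⟨v, hv⟩ | ⟨f, hf⟩)
    · exact absurd hv (by simp)
    · obtain ⟨rfl, rfl⟩ := by simpa using hf
      rfl
  · rintro rfl; exact Or.inr ⟨e, rfl⟩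

lemma ncard_Dstd (hn : 2 ≤ n) : (Dstd n).ncard = 2 * (n - 1) + 1 := by
  rw [Dstd, Set.ncard_union_eq]
  · rw [← Set.image_univ, ← Set.image_univ,
      Set.ncard_image_of_injective _ Sum.inl_injective,
      Set.ncard_image_of_injective _ (fun a b h => by simpa using h),
      Set.ncard_univ, Set.ncard_univ, Nat.card_eq_fintype_card, Fintype.card_fin,
      card_oe hn]
    omega
  · rw [Set.disjoint_left]
    rintro x ⟨v, rfl⟩ ⟨e, he⟩
    exact absurd he (by simp)

lemma dom_Dstd : Dominates (SG n) (Dstd n) := by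
  rintro (v | ⟨e, i⟩) hw
  · exact absurd (mem_Dstd_inl v) hw
  · fin_cases i
    · exact ⟨Sum.inr (e, 1), (mem_Dstd_inr e 1).mpr rfl,
        adj_inr_inr.mpr ⟨rfl, Or.inr rfl⟩⟩
    · exact absurd ((mem_Dstd_inr e 1).mpr rfl) hw
    · exact ⟨Sum.inr (e, 1), (mem_Dstd_inr e 1).mpr rfl,
        adj_inr_inr.mpr ⟨rfl, Or.inl rfl⟩⟩
    · exact ⟨Sum.inl e.val.2, mem_Dstd_inl _,
        adj_inl_inr.mpr (Or.inr ⟨rfl, rfl⟩)⟩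

lemma dom_swap0 (e : OE n) :
    Dominates (SG n) ((Dstd n \ {Sum.inl e.val.1}) ∪ {Sum.inr (e, 0)}) := by
  rintro (x | ⟨f, i⟩) hw
  · by_cases hx : x = e.val.1
    · subst hx
      exact ⟨Sum.inr (e, 0), Or.inr rfl, adj_inr_inl.mpr (Or.inl ⟨rfl, rfl⟩)⟩
    · exact absurd (Or.inl ⟨mem_Dstd_inl x, by simp [hx]⟩) hw
  · fin_cases i
    · by_cases hf : f = e
      · subst hf; exact absurd (Or.inr rfl) hw
      · exact ⟨Sum.inr (f, 1), Or.inl ⟨(mem_Dstd_inr f 1).mpr rfl, by simp⟩,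
          adj_inr_inr.mpr ⟨rfl, Or.inr rfl⟩⟩
    · exact absurd (Or.inl ⟨(mem_Dstd_inr f 1).mpr rfl, by simp⟩) hw
    · exact ⟨Sum.inr (f, 1), Or.inl ⟨(mem_Dstd_inr f 1).mpr rfl, by simp⟩,
        adj_inr_inr.mpr ⟨rfl, Or.inl rfl⟩⟩
    · refine ⟨Sum.inl f.val.2, Or.inl ⟨mem_Dstd_inl _, ?_⟩,
        adj_inl_inr.mpr (Or.inr ⟨rfl, rfl⟩)⟩
      simp only [Set.mem_singleton_iff, Sum.inl.injEq]
      intro h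
      exact oe_snd f (h ▸ oe_fst e)

lemma dom_swap2 (e : OE n) :
    Dominates (SG n) ((Dstd n \ {Sum.inr (e, 1)}) ∪ {Sum.inr (e, 2)}) := by
  rintro (x | ⟨f, i⟩) hw
  · exact absurd (Or.inl ⟨mem_Dstd_inl x, by simp⟩) hw
  · fin_cases i
    · exact ⟨Sum.inl f.val.1, Or.inl ⟨mem_Dstd_inl _, by simp⟩,
        adj_inl_inr.mpr (Or.inl ⟨rfl, rfl⟩)⟩
    · by_cases hf : f = e
      · subst hf
        exact ⟨Sum.inr (f, 2), Or.inr rfl, adj_inr_inr.mpr ⟨rfl, Or.inr rfl⟩⟩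
      · refine absurd (Or.inl ⟨(mem_Dstd_inr f 1).mpr rfl, ?_⟩) hw
        simp [hf]
    · by_cases hf : f = e
      · subst hf; exact absurd (Or.inr rfl) hw
      · refine ⟨Sum.inr (f, 1), Or.inl ⟨(mem_Dstd_inr f 1).mpr rfl, by simp [hf]⟩,
          adj_inr_inr.mpr ⟨rfl, Or.inl rfl⟩⟩
    · exact ⟨Sum.inl f.val.2, Or.inl ⟨mem_Dstd_inl _, by simp⟩,
        adj_inl_inr.mpr (Or.inr ⟨rfl, rfl⟩)⟩

lemma dom_swap3 (e : OE n) :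
    Dominates (SG n) ((Dstd n \ {Sum.inl e.val.2}) ∪ {Sum.inr (e, 3)}) := by
  rintro (x | ⟨f, i⟩) hw
  · by_cases hx : x = e.val.2
    · subst hx
      exact ⟨Sum.inr (e, 3), Or.inr rfl, adj_inr_inl.mpr (Or.inr ⟨rfl, rfl⟩)⟩
    · exact absurd (Or.inl ⟨mem_Dstd_inl x, by simp [hx]⟩) hw
  · fin_cases i
    · refine ⟨Sum.inl f.val.1, Or.inl ⟨mem_Dstd_inl _, ?_⟩,
        adj_inl_inr.mpr (Or.inl ⟨rfl, rfl⟩)⟩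
      simp only [Set.mem_singleton_iff, Sum.inl.injEq]
      intro h
      exact oe_snd e (h.symm ▸ oe_fst f)
    · exact absurd (Or.inl ⟨(mem_Dstd_inr f 1).mpr rfl, by simp⟩) hw
    · exact ⟨Sum.inr (f, 1), Or.inl ⟨(mem_Dstd_inr f 1).mpr rfl, by simp⟩,
        adj_inr_inr.mpr ⟨rfl, Or.inl rfl⟩⟩
    · by_cases hf : f = e
      · subst hf; exact absurd (Or.inr rfl) hw
      · refine ⟨Sum.inl f.val.2, Or.inl ⟨mem_Dstd_inl _, ?_⟩,
          adj_inl_inr.mpr (Or.inr ⟨rfl, rfl⟩)⟩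
        simp only [Set.mem_singleton_iff, Sum.inl.injEq]
        exact fun h => hf (oe_ext h)

lemma secure_Dstd : SecureDominates (SG n) (Dstd n) := by
  refine ⟨dom_Dstd, ?_⟩
  rintro (v | ⟨e, i⟩) hu
  · exact absurd (mem_Dstd_inl v) hu
  · fin_cases i
    · exact ⟨Sum.inl e.val.1, mem_Dstd_inl _,
        adj_inr_inl.mpr (Or.inl ⟨rfl, rfl⟩), dom_swap0 e⟩
    · exact absurd ((mem_Dstd_inr e 1).mpr rfl) hu
    · exact ⟨Sum.inr (e, 1), (mem_Dstd_inr e 1).mpr rfl,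
        adj_inr_inr.mpr ⟨rfl, Or.inr rfl⟩, dom_swap2 e⟩
    · exact ⟨Sum.inl e.val.2, mem_Dstd_inl _,
        adj_inr_inl.mpr (Or.inr ⟨rfl, rfl⟩), dom_swap3 e⟩

lemma exists_B {D : Set (W n)} (hD : Dominates (SG n) D) (e : OE n) :
    ∃ b ∈ D, b = Sum.inr (e, 3) ∨ b = Sum.inl e.val.2 := by
  by_cases h : Sum.inl e.val.2 ∈ D
  · exact ⟨_, h, Or.inr rfl⟩
  · obtain ⟨u, hu, hadj⟩ := hD _ h
    match u with
    | Sum.inl x => exact absurd hadj adj_inl_inl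
    | Sum.inr (f, i) =>
      rw [adj_inr_inl] at hadj
      rcases hadj with ⟨hi, hx⟩ | ⟨hi, hx⟩
      · exact absurd (hx ▸ oe_fst f) (oe_snd e)
      · refine ⟨_, hu, Or.inl ?_⟩
        have : f = e := oe_ext (by rw [← hx])
        subst this
        congr 1
        exact Prod.ext rfl (Fin.ext hi)

lemma exists_A {D : Set (W n)} (hD : Dominates (SG n) D) (e : OE n) :
    ∃ a ∈ D, a = Sum.inr (e, 0) ∨ a = Sum.inr (e, 1) ∨ a = Sum.inr (e, 2) := by
  by_cases h : Sum.inr (e, (1 : Fin 4)) ∈ D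
  · exact ⟨_, h, Or.inr (Or.inl rfl)⟩
  · obtain ⟨u, hu, hadj⟩ := hD _ h
    match u with
    | Sum.inl x =>
      rw [adj_inl_inr] at hadj
      rcases hadj with ⟨hi, _⟩ | ⟨hi, _⟩ <;> simp at hi
    | Sum.inr (f, j) =>
      rw [adj_inr_inr] at hadj
      obtain ⟨rfl, hj⟩ := hadj
      rcases hj with hj | hj
      · refine ⟨_, hu, Or.inl ?_⟩
        congr 1
        exact Prod.ext rfl (Fin.ext (by simpa using hj))
      · refine ⟨_, hu, Or.inr (Or.inr ?_)⟩
        congr 1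
        exact Prod.ext rfl (Fin.ext (by simpa using hj.symm))

lemma lower_bound (hn : 2 ≤ n) {D : Set (W n)} (hD : SecureDominates (SG n) D) :
    2 * (n - 1) + 1 ≤ D.ncard := by
  classical
  obtain ⟨hdom, hsec⟩ := hD
  choose a ha using exists_A hdom
  choose b hb using exists_B hdom
  set c0 : Fin n := ⟨0, by omega⟩ with hc0
  -- find the extra element c
  have hextra : ∃ c ∈ D, (∀ e, c ≠ a e) ∧ (∀ e, c ≠ b e) := by
    by_cases hc : Sum.inl c0 ∈ D
    · refine ⟨Sum.inl c0, hc, fun e => ?_, fun e => ?_⟩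
      · rcases (ha e).2 with h | h | h <;> simp [h]
      · rcases (hb e).2 with h | h
        · simp [h]
        · rw [h]
          simp only [ne_eq, Sum.inl.injEq]
          intro hh
          exact oe_snd e (by rw [← hh])
    · obtain ⟨v, hv, hadj, hdom'⟩ := hsec _ hc
      match v with
      | Sum.inl x => exact absurd hadj (by rw [SimpleGraph.adj_comm]; exact adj_inl_inl)
      | Sum.inr (f, i) =>
        rw [adj_inl_inr] at hadj
        rcases hadj with ⟨hi, _⟩ | ⟨hi, hx⟩
        · -- i = 0
          have hi' : i = 0 := Fin.ext hi
          subst hi'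
          -- get x ∈ D with x = inr(f,1) or inr(f,2)
          have hx : ∃ x ∈ D, x = Sum.inr (f, 1) ∨ x = Sum.inr (f, 2) := by
            by_cases h1 : (Sum.inr (f, (1:Fin 4)) : W n) ∈ (D \ {Sum.inr (f, (0:Fin 4))}) ∪ {Sum.inl c0}
            · rcases h1 with ⟨h1, _⟩ | h1
              · exact ⟨_, h1, Or.inl rfl⟩
              · exact absurd h1 (by simp)
            · obtain ⟨u, hu, hadj⟩ := hdom' _ h1
              match u with
              | Sum.inl y =>
                rw [adj_inl_inr] at hadj
                rcases hadj with ⟨hj, _⟩ | ⟨hj, _⟩ <;> simp at hj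
              | Sum.inr (g, j) =>
                rw [adj_inr_inr] at hadj
                obtain ⟨rfl, hj⟩ := hadj
                have hu' : (Sum.inr (g, j) : W n) ∈ D ∧ j ≠ 0 := by
                  rcases hu with ⟨hu, hne⟩ | hu
                  · refine ⟨hu, fun hj0 => hne ?_⟩
                    rw [hj0]; rfl
                  · exact absurd hu (by simp)
                rcases hj with hj | hj
                · exact absurd (Fin.ext (by simpa using hj) : j = 0) hu'.2
                · exact ⟨_, hu'.1, Or.inr (by
                    congr 2
                    exact Fin.ext (by simpa using hj.symm))⟩
          obtain ⟨x, hxD, hxeq⟩ := hx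
          by_cases haf : a f = Sum.inr (f, 0)
          · refine ⟨x, hxD, fun e => ?_, fun e => ?_⟩
            · by_cases hef : e = f
              · subst hef
                rw [haf]
                rcases hxeq with h | h <;> simp [h]
              · rcases (ha e).2 with h | h | h <;> rw [h] <;>
                  rcases hxeq with h2 | h2 <;> rw [h2] <;>
                  exact fun hh => hef (congrArg Prod.fst (Sum.inr_injective hh)).symm
            · rcases (hb e).2 with h | h <;>
                rcases hxeq with h2 | h2 <;> simp [h, h2]
          · refine ⟨Sum.inr (f, 0), hv, fun e => ?_, fun e => ?_⟩
            · by_cases hef : e = f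
              · subst hef; exact fun hh => haf hh.symm
              · rcases (ha e).2 with h | h | h <;> rw [h] <;>
                  exact fun hh => hef (congrArg Prod.fst (Sum.inr_injective hh)).symm
            · rcases (hb e).2 with h | h <;> simp [h]
        · -- i = 3: impossible, c0 = f.val.2
          exact absurd (hx ▸ rfl : c0.val = _) (fun hh => oe_snd f (hh.symm))
  obtain ⟨c, hcD, hca, hcb⟩ := hextra
  -- the injection
  set F : W n → W n := fun w =>
    match w with
    | Sum.inl v => if hv : v.val = 0 then c else b (mkOE v hv)
    | Sum.inr (e, _) => a e
    with hF
  have hmaps : Set.MapsTo F (Dstd n) D := by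
    intro w hw
    obtain (v | ⟨e, i⟩) := w
    · simp only [hF]
      split
      · exact hcD
      · exact (hb _).1
    · exact (ha e).1
  have hinj : Set.InjOn F (Dstd n) := by
    intro w1 h1 w2 h2 heq
    obtain (v1 | ⟨e1, i1⟩) := w1 <;> obtain (v2 | ⟨e2, i2⟩) := w2
    · simp only [hF] at heq
      split at heq <;> split at heq
      · rename_i hv1 hv2; congr 1; exact Fin.ext (by rw [hv1, hv2])
      · exact absurd heq (hcb _)
      · exact absurd heq.symm (hcb _)
      · rename_i hv1 hv2
        have : mkOE v1 hv1 = mkOE v2 hv2 := by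
          rcases (hb (mkOE v1 hv1)).2 with h | h <;> rcases (hb (mkOE v2 hv2)).2 with h' | h' <;>
            rw [h, h'] at heq
          · exact oe_ext (congrArg (fun y => (Prod.fst y).val.2) (Sum.inr_injective heq) ▸ rfl)
          · exact absurd heq (by simp)
          · exact absurd heq (by simp)
          · exact oe_ext (by simpa using heq)
        have := congrArg (fun e => e.val.2) this
        simpa using this
    · -- inl vs inr
      have hi2 : i2 = 1 := (mem_Dstd_inr e2 i2).mp h2
      simp only [hF] at heq
      split at heq
      · exact absurd heq (hca _)
      · rcases (hb _).2 with h | h <;> rcases (ha e2).2 with h' | h' | h' <;>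
          rw [h, h'] at heq <;> simp at heq
    · have hi1 : i1 = 1 := (mem_Dstd_inr e1 i1).mp h1
      simp only [hF] at heq
      split at heq
      · exact absurd heq.symm (hca _)
      · rcases (hb _).2 with h | h <;> rcases (ha e1).2 with h' | h' | h' <;>
          rw [h, h'] at heq <;> simp at heq
    · have hi1 : i1 = 1 := (mem_Dstd_inr e1 i1).mp h1
      have hi2 : i2 = 1 := (mem_Dstd_inr e2 i2).mp h2
      subst hi1; subst hi2
      simp only [hF] at heq
      have : e1 = e2 := by
        rcases (ha e1).2 with h | h | h <;> rcases (ha e2).2 with h' | h' | h' <;>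
          rw [h, h'] at heq <;> exact congrArg Prod.fst (Sum.inr_injective heq)
      rw [this]
  calc 2 * (n - 1) + 1 = (Dstd n).ncard := (ncard_Dstd hn).symm
    _ ≤ D.ncard := Set.ncard_le_ncard_of_injOn F hmaps hinj (Set.toFinite D)
end Stmt12

/-- For every star `Sₙ = K_{1,n-1}` with `n ≥ 2`,
`γₛ(Sₙ^{1/5}) = 3(n-1) - (n-1) + 1 = 2(n-1) + 1`. -/
theorem stmt_12 (n : ℕ) (hn : 2 ≤ n) :
    secDomNum (Subdiv (_root_.starGraph n) 5) = 2 * (n - 1) + 1 := by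
  have hmem : 2 * (n - 1) + 1 ∈
      {m | ∃ D : Set (Stmt12.W n), SecureDominates (Stmt12.SG n) D ∧ D.ncard = m} :=
    ⟨Stmt12.Dstd n, Stmt12.secure_Dstd, Stmt12.ncard_Dstd hn⟩
  refine le_antisymm (Nat.sInf_le hmem) (le_csInf ⟨_, hmem⟩ ?_)
  rintro m ⟨D, hD, rfl⟩
  exact Stmt12.lower_bound hn hD
end

section
/- For any simple graph G with at least one edge, the vertex set of G (viewed as a subset of the vertices of G^{1/2}) is a secure dominating set of the 2-subdivision G^{1/2}; consequently γ_s(G^{1/2}) ≤ |V(G)| whenever G has no isolated vertices. -/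
open SimpleGraph

/-- For any simple graph `G` with no isolated vertices, `V(G)` (viewed inside
`G^{1/2}`) is a secure dominating set of `G^{1/2}`; consequently `γₛ(G^{1/2}) ≤ |V(G)|`. -/
theorem stmt_16 {V : Type*} [Fintype V] [LinearOrder V] (G : SimpleGraph V)
    (h : ∀ v : V, ∃ u, G.Adj v u) :
    SecureDominates (Subdiv G 2) (Set.range Sum.inl) ∧
    secDomNum (Subdiv G 2) ≤ Nat.card V := by

  classical
  have adj_il : ∀ (u : V) (e : OEdge G) (i : Fin (2-1)),
      u = e.val.1 ∨ u = e.val.2 → (Subdiv G 2).Adj (Sum.inl u) (Sum.inr (e, i)) := by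
    intro u e i hu
    have hi : i.val = 0 := Nat.lt_one_iff.mp i.isLt
    refine SimpleGraph.fromRel_adj .. |>.mpr ⟨by simp, Or.inl ?_⟩
    rcases hu with hu | hu
    · exact Or.inl ⟨hi, hu⟩
    · exact Or.inr ⟨by omega, hu⟩
  have key : SecureDominates (Subdiv G 2) (Set.range Sum.inl) := by
    constructor
    · rintro (w | ⟨e, i⟩) hw
      · exact absurd ⟨w, rfl⟩ hw
      · exact ⟨Sum.inl e.val.1, ⟨_, rfl⟩, adj_il _ _ _ (Or.inl rfl)⟩
    · rintro (w | ⟨e, i⟩) hw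
      · exact absurd ⟨w, rfl⟩ hw
      · refine ⟨Sum.inl e.val.1, ⟨_, rfl⟩, ((adj_il _ _ _ (Or.inl rfl)).symm), ?_⟩
        rintro (x | ⟨f, j⟩) hx
        · have hxe : x = e.val.1 := by
            by_contra hne
            exact hx (Or.inl ⟨⟨x, rfl⟩, by simp [hne]⟩)
          subst hxe
          exact ⟨Sum.inr (e, i), Or.inr rfl, (adj_il _ _ _ (Or.inl rfl)).symm⟩
        · by_cases hf : f.val.1 = e.val.1
          · have hne : f.val.2 ≠ e.val.1 := by
              intro h2
              have := f.prop.2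
              rw [h2, ← hf] at this
              exact lt_irrefl _ this
            refine ⟨Sum.inl f.val.2, Or.inl ⟨⟨_, rfl⟩, by simp [hne]⟩,
              adj_il _ _ _ (Or.inr rfl)⟩
          · exact ⟨Sum.inl f.val.1, Or.inl ⟨⟨_, rfl⟩, by simp [hf]⟩,
              adj_il _ _ _ (Or.inl rfl)⟩
  refine ⟨key, ?_⟩
  have hcard : (Set.range (Sum.inl : V → V ⊕ (OEdge G × Fin (2-1)))).ncard = Nat.card V := by
    rw [← Nat.card_coe_set_eq]
    exact Nat.card_congr (Equiv.ofInjective _ Sum.inl_injective).symm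
  exact Nat.sInf_le ⟨_, key, hcard⟩
end

section
/- For any simple graph G with no isolated vertices, the set of all internal (subdivision) vertices of G^{1/3} — i.e., the set {x_1^{uv}, x_2^{uv} : uv ∈ E(G)} — is a secure dominating set of G^{1/3} of size 2|E(G)|. -/
open SimpleGraph

lemma adjchar {V : Type*} [LinearOrder V] (G : SimpleGraph V) (u : V) (e : OEdge G) (i : Fin 2) :
    (Subdiv G 3).Adj (Sum.inl u) (Sum.inr (e, i)) ↔
      ((i.val = 0 ∧ u = e.val.1) ∨ (i.val = 1 ∧ u = e.val.2)) := by
  rw [Subdiv, SimpleGraph.fromRel_adj]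
  constructor
  · rintro ⟨hne, hrel | hrel⟩
    · exact hrel
    · exact hrel.elim
  · intro hh
    exact ⟨by simp, Or.inl hh⟩

lemma key_nbr {V : Type*} [LinearOrder V] (G : SimpleGraph V) (h : ∀ v : V, ∃ u, G.Adj v u)
    (w : V) : ∃ (e : OEdge G) (i : Fin 2),
      (Subdiv G 3).Adj (Sum.inl w) (Sum.inr (e, i)) := by
  obtain ⟨u, hu⟩ := h w
  rcases lt_or_gt_of_ne (G.ne_of_adj hu) with hlt | hlt
  · exact ⟨⟨(w, u), hu, hlt⟩, 0, (adjchar G w _ _).2 (Or.inl ⟨rfl, rfl⟩)⟩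
  · exact ⟨⟨(u, w), hu.symm, hlt⟩, 1, (adjchar G w _ _).2 (Or.inr ⟨rfl, rfl⟩)⟩

lemma nbr_unique {V : Type*} [LinearOrder V] (G : SimpleGraph V) {u u' : V} {e : OEdge G}
    {i : Fin 2} (h1 : (Subdiv G 3).Adj (Sum.inl u) (Sum.inr (e, i)))
    (h2 : (Subdiv G 3).Adj (Sum.inl u') (Sum.inr (e, i))) : u = u' := by
  rw [adjchar] at h1 h2
  rcases h1 with ⟨hi, rfl⟩ | ⟨hi, rfl⟩ <;> rcases h2 with ⟨hi', rfl⟩ | ⟨hi', rfl⟩ <;>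
    first | rfl | (rw [hi] at hi'; simp at hi')

lemma secdom_aux {V : Type*} [Fintype V] [LinearOrder V] (G : SimpleGraph V)
    (h : ∀ v : V, ∃ u, G.Adj v u) :
    SecureDominates (Subdiv G 3) (Set.range Sum.inr) := by
  have notmem : ∀ x : V ⊕ (OEdge G × Fin (3-1)),
      x ∉ Set.range (Sum.inr : OEdge G × Fin (3-1) → _) → ∃ w, x = Sum.inl w := by
    rintro (w | p) hx
    · exact ⟨w, rfl⟩
    · exact absurd ⟨p, rfl⟩ hx
  have dom : Dominates (Subdiv G 3) (Set.range Sum.inr) := by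
    intro x hx
    obtain ⟨w, rfl⟩ := notmem x hx
    obtain ⟨e, i, hadj⟩ := key_nbr G h w
    exact ⟨Sum.inr (e, i), ⟨(e, i), rfl⟩, hadj.symm⟩
  refine ⟨dom, ?_⟩
  intro x hx
  obtain ⟨w, rfl⟩ := notmem x hx
  obtain ⟨e, i, hadj⟩ := key_nbr G h w
  refine ⟨Sum.inr (e, i), ⟨(e, i), rfl⟩, hadj, ?_⟩
  intro y hy
  rcases y with w' | p
  · have hw' : w' ≠ w := by
      rintro rfl
      exact hy (Or.inr rfl)
    obtain ⟨e', i', hadj'⟩ := key_nbr G h w'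
    refine ⟨Sum.inr (e', i'), Or.inl ⟨⟨(e', i'), rfl⟩, ?_⟩, hadj'.symm⟩
    intro hmem
    rw [Set.mem_singleton_iff] at hmem
    have : (e', i') = (e, i) := Sum.inr_injective hmem
    rw [this] at hadj'
    exact hw' (nbr_unique G hadj' hadj)
  · have hp : Sum.inr p = (Sum.inr (e, i) : V ⊕ (OEdge G × Fin (3-1))) := by
      by_contra hne
      exact hy (Or.inl ⟨⟨p, rfl⟩, hne⟩)
    exact ⟨Sum.inl w, Or.inr rfl, hp ▸ hadj⟩

lemma oedge_card {V : Type*} [LinearOrder V] (G : SimpleGraph V) :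
    Nat.card (OEdge G) = Nat.card G.edgeSet := by
  apply Nat.card_eq_of_bijective (fun e => ⟨s(e.val.1, e.val.2), e.prop.1⟩)
  constructor
  · rintro ⟨⟨a, b⟩, hab, hlt⟩ ⟨⟨c, d⟩, hcd, hlt'⟩ hfe
    simp only [Subtype.mk.injEq, Sym2.eq_iff] at hfe ⊢
    rcases Sym2.eq_iff.mp (congrArg Subtype.val hfe) with ⟨rfl, rfl⟩ | ⟨rfl, rfl⟩
    · rfl
    · exact absurd (hlt.trans hlt') (lt_irrefl _)
  · rintro ⟨z, hz⟩
    induction z using Sym2.ind with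
    | _ a b =>
      rw [SimpleGraph.mem_edgeSet] at hz
      rcases lt_or_gt_of_ne (G.ne_of_adj hz) with hlt | hlt
      · exact ⟨⟨(a, b), hz, hlt⟩, rfl⟩
      · exact ⟨⟨(b, a), hz.symm, hlt⟩, Subtype.ext (Sym2.eq_swap)⟩

/-- For any simple graph `G` with no isolated vertices, the set of all internal
(subdivision) vertices of `G^{1/3}` is a secure dominating set of `G^{1/3}` of size `2|E(G)|`. -/
theorem stmt_17 {V : Type*} [Fintype V] [LinearOrder V] (G : SimpleGraph V)
    (h : ∀ v : V, ∃ u, G.Adj v u) :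
    SecureDominates (Subdiv G 3) (Set.range Sum.inr) ∧
    (Set.range (Sum.inr : OEdge G × Fin (3 - 1) → V ⊕ (OEdge G × Fin (3 - 1)))).ncard =
      2 * Nat.card G.edgeSet := by
  refine ⟨secdom_aux G h, ?_⟩
  rw [← Nat.card_coe_set_eq, Nat.card_range_of_injective Sum.inr_injective,
    Nat.card_prod, Nat.card_eq_fintype_card (α := Fin (3-1)), oedge_card]
  simp [Nat.mul_comm]
end
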